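/- Let n ≥ 1 and let p : {0,1}^n → ℝ be a probability mass function (p(s) ≥ 0, Σ_s p(s) = 1) such that p(0_n) > 0 and p(e_i) > 0 for every standard basis vector e_i, 1 ≤ i ≤ n. For s ∈ {0,1}^n let α(s) := (s_1, …, s_n, −1)^T ∈ ℝ^{n+1}. Then the (n+1)×(n+1) matrix M := Σ_{s ∈ {0,1}^n} p(s) · α(s) α(s)^T is positive definite. -/

import Mathlib

open Matrix

/-- The real value of a binary observation coordinate. -/
def bval (b : Bool) : ℝ := if b then 1 else 0

/-- quadratic form of a rank-one matrix `v vᵀ`: `xᵀ (v vᵀ) x = (v ⬝ᵥ x)²`. -/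
lemma quad_form (m : ℕ) (v x : Fin m → ℝ) :
    x ⬝ᵥ ((vecMulVec v v) *ᵥ x) = (v ⬝ᵥ x) ^ 2 := by
  simp only [mulVec, vecMulVec_apply, dotProduct, sq, Finset.sum_mul, Finset.mul_sum]
  rw [Finset.sum_comm]
  apply Finset.sum_congr rfl; intros; apply Finset.sum_congr rfl; intros; ring

/-- **Positive-definiteness of the second-moment matrix** (Step 2 of the proof of Theorem 4).
If `p` is a pmf on `{0,1}^n` assigning positive mass to the zero vector and to every unit
vector, and `α(s) = (s₁,…,sₙ,−1)ᵀ ∈ ℝ^{n+1}`, then `M = Σ_s p(s) α(s) α(s)ᵀ` is positive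
definite. -/
theorem stmt9 (n : ℕ) (hn : 1 ≤ n) (p : (Fin n → Bool) → ℝ)
    (hnn : ∀ s, 0 ≤ p s) (hsum : ∑ s, p s = 1)
    (h0 : 0 < p (fun _ => false))
    (he : ∀ i : Fin n, 0 < p (fun j => if j = i then true else false)) :
    (∑ s : Fin n → Bool, p s •
      Matrix.vecMulVec (Fin.snoc (fun i => bval (s i)) (-1 : ℝ))
        (Fin.snoc (fun i => bval (s i)) (-1 : ℝ))).PosDef := by
  set v : (Fin n → Bool) → Fin (n+1) → ℝ :=
    fun s => Fin.snoc (fun i => bval (s i)) (-1 : ℝ) with hv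
  rw [posDef_iff_dotProduct_mulVec]
  constructor
  · unfold Matrix.IsHermitian
    ext i j
    simp [Matrix.sum_apply, vecMulVec_apply, mul_comm]
  · intro x hx
    have key : dotProduct (star x) ((∑ s : Fin n → Bool, p s • vecMulVec (v s) (v s)) *ᵥ x)
        = ∑ s : Fin n → Bool, p s * (v s ⬝ᵥ x) ^ 2 := by
      rw [star_trivial]
      have h1 : (∑ s : Fin n → Bool, p s • vecMulVec (v s) (v s)) *ᵥ x
          = ∑ s : Fin n → Bool, p s • ((vecMulVec (v s) (v s)) *ᵥ x) := by
        ext i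
        simp only [mulVec, dotProduct, Matrix.sum_apply, Finset.sum_apply, Pi.smul_apply,
          smul_eq_mul, Matrix.smul_apply, Finset.mul_sum]
        rw [Finset.sum_comm]
        exact Finset.sum_congr rfl fun j _ => by
          rw [Finset.sum_mul]; exact Finset.sum_congr rfl fun s _ => by ring
      have h2 : x ⬝ᵥ (∑ s : Fin n → Bool, p s • ((vecMulVec (v s) (v s)) *ᵥ x))
          = ∑ s : Fin n → Bool, x ⬝ᵥ (p s • ((vecMulVec (v s) (v s)) *ᵥ x)) := by
        simp only [dotProduct, Finset.sum_apply, Finset.mul_sum]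
        exact Finset.sum_comm
      rw [h1, h2]
      apply Finset.sum_congr rfl
      intro s _
      rw [dotProduct_smul, quad_form]
      rfl
    rw [key]
    -- dot product with snoc
    have hdot : ∀ s : Fin n → Bool, v s ⬝ᵥ x =
        (∑ i : Fin n, bval (s i) * x i.castSucc) - x (Fin.last n) := by
      intro s
      rw [dotProduct, Fin.sum_univ_castSucc]
      simp [hv]
      ring
    -- find s₀ with p s₀ > 0 and v s₀ ⬝ᵥ x ≠ 0
    obtain ⟨s₀, hp₀, hd₀⟩ : ∃ s₀, 0 < p s₀ ∧ v s₀ ⬝ᵥ x ≠ 0 := by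
      by_cases hl : x (Fin.last n) = 0
      · obtain ⟨j, hj⟩ := Function.ne_iff.mp hx
        have hjne : j ≠ Fin.last n := by rintro rfl; exact hj hl
        obtain ⟨i, rfl⟩ := Fin.exists_castSucc_eq.mpr hjne
        refine ⟨fun k => if k = i then true else false, he i, ?_⟩
        rw [hdot, hl, sub_zero]
        have : (∑ k : Fin n, bval (if k = i then true else false) * x k.castSucc)
            = x i.castSucc := by
          rw [Finset.sum_eq_single i]
          · simp [bval]
          · intro b _ hb; simp [bval, hb]
          · simp
        rw [this]; exact hj
      · refine ⟨fun _ => false, h0, ?_⟩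
        rw [hdot]
        simp [bval]
        exact hl
    have hle : p s₀ * (v s₀ ⬝ᵥ x) ^ 2 ≤ ∑ s : Fin n → Bool, p s * (v s ⬝ᵥ x) ^ 2 :=
      Finset.single_le_sum (f := fun s => p s * (v s ⬝ᵥ x) ^ 2)
        (fun s _ => mul_nonneg (hnn s) (sq_nonneg _)) (Finset.mem_univ s₀)
    have hsq : 0 < (v s₀ ⬝ᵥ x) ^ 2 :=
      lt_of_le_of_ne (sq_nonneg _) (Ne.symm (pow_ne_zero 2 hd₀))
    exact lt_of_lt_of_le (mul_pos hp₀ hsq) hle
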